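/- Let Γ be the segment in ℝ² joining two distinct points A=(x_A,y_A) and B=(x_B,y_B), with line coefficients a=y_B−y_A, b=x_A−x_B, c=x_B y_A−y_B x_A. Given three real numbers W₁, W_x, W_y, there exists an affine traction force F along Γ (i.e. F(s)=F₀+sF₁ in the normalized abscissa s∈[−1/2,1/2]) whose works satisfy W(1)=W₁, W(x)=W_x and W(y)=W_y if and only if a·W_x + b·W_y + c·W₁ = 0. -/

import Mathlib

lemma quad_integral (p q r : ℝ) :
    (∫ s in (-(1:ℝ)/2)..(1/2), (p + q*s + r*s^2)) = p + r/12 := by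
  have h1 : IntervalIntegrable (fun s : ℝ => p) MeasureTheory.volume (-(1:ℝ)/2) (1/2) :=
    intervalIntegrable_const
  have h2 : IntervalIntegrable (fun s : ℝ => q*s) MeasureTheory.volume (-(1:ℝ)/2) (1/2) :=
    (continuous_const.mul continuous_id).intervalIntegrable _ _
  have h3 : IntervalIntegrable (fun s : ℝ => r*s^2) MeasureTheory.volume (-(1:ℝ)/2) (1/2) :=
    (continuous_const.mul (continuous_pow 2)).intervalIntegrable _ _
  rw [show (fun s : ℝ => p + q*s + r*s^2) = (fun s : ℝ => (p + q*s) + r*s^2) from rfl]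
  rw [intervalIntegral.integral_add (h1.add h2) h3,
      intervalIntegral.integral_add h1 h2,
      intervalIntegral.integral_const,
      intervalIntegral.integral_const_mul, intervalIntegral.integral_const_mul,
      integral_id, integral_pow]
  norm_num; ring

theorem affine_traction_exists_iff
    (xA yA xB yB : ℝ) (hAB : (xA, yA) ≠ (xB, yB))
    (a b c L xO yO : ℝ)
    (ha : a = yB - yA) (hb : b = xA - xB) (hc : c = xB * yA - yB * xA)
    (hL : L = Real.sqrt ((xB - xA) ^ 2 + (yB - yA) ^ 2))
    (hxO : xO = (xA + xB) / 2) (hyO : yO = (yA + yB) / 2)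
    (W₁ Wx Wy : ℝ) :
    (∃ F₀ F₁ : ℝ,
      (L * ∫ s in (-(1:ℝ)/2)..(1/2), (F₀ + s * F₁)) = W₁ ∧
      (L * ∫ s in (-(1:ℝ)/2)..(1/2), (F₀ + s * F₁) * (xO - s * b)) = Wx ∧
      (L * ∫ s in (-(1:ℝ)/2)..(1/2), (F₀ + s * F₁) * (yO + s * a)) = Wy) ↔
    a * Wx + b * Wy + c * W₁ = 0 := by
  -- positivity of L
  have hne : (xB - xA) ^ 2 + (yB - yA) ^ 2 > 0 := by
    have h' : xA ≠ xB ∨ yA ≠ yB := by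
      by_contra hcon
      push_neg at hcon
      exact hAB (Prod.ext hcon.1 hcon.2)
    rcases h' with h | h
    · have h2 : (0:ℝ) < (xB - xA)^2 :=
        pow_pos (abs_pos.mpr (sub_ne_zero.mpr h.symm)) 2 |>.trans_le (by rw [sq_abs])
      nlinarith [sq_nonneg (yB - yA)]
    · have h2 : (0:ℝ) < (yB - yA)^2 :=
        pow_pos (abs_pos.mpr (sub_ne_zero.mpr h.symm)) 2 |>.trans_le (by rw [sq_abs])
      nlinarith [sq_nonneg (xB - xA)]
  have hLpos : 0 < L := hL ▸ Real.sqrt_pos.mpr hne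
  have hL2 : L ^ 2 = a ^ 2 + b ^ 2 := by
    rw [hL, Real.sq_sqrt hne.le, ha, hb]; ring
  -- evaluate the three integrals
  have e1 : ∀ F₀ F₁ : ℝ, (∫ s in (-(1:ℝ)/2)..(1/2), (F₀ + s * F₁)) = F₀ := by
    intro F₀ F₁
    have : (fun s : ℝ => F₀ + s * F₁) = fun s : ℝ => (F₀ + F₁*s + 0*s^2) := by
      funext s; ring
    rw [this, quad_integral]; try ring
  have e2 : ∀ F₀ F₁ : ℝ, (∫ s in (-(1:ℝ)/2)..(1/2), (F₀ + s * F₁) * (xO - s * b))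
      = F₀*xO - F₁*b/12 := by
    intro F₀ F₁
    have : (fun s : ℝ => (F₀ + s * F₁) * (xO - s * b))
        = fun s : ℝ => (F₀*xO + (F₁*xO - F₀*b)*s + (-(F₁*b))*s^2) := by
      funext s; ring
    rw [this, quad_integral]; try ring
  have e3 : ∀ F₀ F₁ : ℝ, (∫ s in (-(1:ℝ)/2)..(1/2), (F₀ + s * F₁) * (yO + s * a))
      = F₀*yO + F₁*a/12 := by
    intro F₀ F₁
    have : (fun s : ℝ => (F₀ + s * F₁) * (yO + s * a))
        = fun s : ℝ => (F₀*yO + (F₁*yO + F₀*a)*s + (F₁*a)*s^2) := by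
      funext s; ring
    rw [this, quad_integral]; try ring
  constructor
  · rintro ⟨F₀, F₁, h1, h2, h3⟩
    rw [e1] at h1; rw [e2] at h2; rw [e3] at h3
    subst ha hb hc hxO hyO h1 h2 h3
    ring
  · intro h
    refine ⟨W₁/L, 12*(a*(Wy - yO*W₁) - b*(Wx - xO*W₁))/L^3, ?_, ?_, ?_⟩
    · rw [e1]; field_simp
    · rw [e2]
      have habc : a*xO + b*yO + c = 0 := by subst ha hb hc hxO hyO; ring
      field_simp
      linear_combination (W₁*xO - Wx) * hL2 + (-a) * h + (a*W₁) * habc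
    · rw [e3]
      have habc : a*xO + b*yO + c = 0 := by subst ha hb hc hxO hyO; ring
      field_simp
      linear_combination (W₁*yO - Wy) * hL2 + (-b) * h + (b*W₁) * habc
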